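/- arXiv:2104.12318 — 2 statements merged into one kernel-verified Lean document; each statement's English description precedes it below -/
import Mathlib

section
/- In a simply-laced triangle-free Coxeter system, if α and β are braid equivalent reduced expressions for the same element w with ℓ(w) ≥ 3, and ⟦i,i+2⟧ is a braid shadow of both α and β, then the set of generators appearing in positions i, i+1, i+2 of α equals the set of generators appearing in positions i, i+1, i+2 of β. -/
open List

namespace BraidFormal

variable {B : Type*}

/-- A single braid move: replace a factor `s t s` with `t s t` where `m(s,t) = 3`. -/
def IsBraidMove (M : CoxeterMatrix B) (w w' : List B) : Prop :=
  ∃ (u v : List B) (s t : B), M s t = 3 ∧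
    w = u ++ [s, t, s] ++ v ∧ w' = u ++ [t, s, t] ++ v

/-- Braid equivalence: the reflexive-transitive closure of braid moves. -/
def BraidEquiv (M : CoxeterMatrix B) : List B → List B → Prop :=
  Relation.ReflTransGen (IsBraidMove M)

/-- The braid class of a word. -/
def BraidClass (M : CoxeterMatrix B) (α : List B) : Set (List B) :=
  {β | BraidEquiv M α β}

/-- `w` has a braid shadow at (0-based) positions `i, i+1, i+2`:
the letters there are `s, t, s` with `m(s,t) = 3`.
(This corresponds to the 1-based interval `⟦i+1, i+3⟧` of the paper.) -/
def HasShadowAt (M : CoxeterMatrix B) (w : List B) (i : ℕ) : Prop :=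
  ∃ s t : B, M s t = 3 ∧ w[i]? = some s ∧ w[i+1]? = some t ∧ w[i+2]? = some s

/-- The braid class of `α` has a braid shadow at position `i`. -/
def ClassHasShadowAt (M : CoxeterMatrix B) (α : List B) (i : ℕ) : Prop :=
  ∃ β ∈ BraidClass M α, HasShadowAt M β i

/-- The rank of a reduced expression: the number of braid shadows of its braid class. -/
noncomputable def rank (M : CoxeterMatrix B) (α : List B) : ℕ :=
  Set.ncard {i | ClassHasShadowAt M α i}

/-- A Coxeter matrix is simply laced if all entries are at most 3. -/
def SimplyLaced (M : CoxeterMatrix B) : Prop := ∀ s t : B, M s t ≤ 3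

/-- A Coxeter matrix is triangle free if its Coxeter graph has no three-cycles
(all of whose edges are labelled 3). -/
def TriangleFree (M : CoxeterMatrix B) : Prop :=
  ∀ s t u : B, s ≠ t → t ≠ u → s ≠ u → M s t = 3 → M t u = 3 → M s u ≠ 3

/-- The set of generators appearing in (0-based) position `k` of some word in the
braid class of `α`. -/
def classSupp (M : CoxeterMatrix B) (α : List B) (k : ℕ) : Set B :=
  {s | ∃ β ∈ BraidClass M α, β[k]? = some s}

/-- The set of generators appearing in (0-based) positions `i` through `j` of `w`. -/
def suppInterval (w : List B) (i j : ℕ) : Set B :=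
  {s | ∃ k, i ≤ k ∧ k ≤ j ∧ w[k]? = some s}

variable {W : Type*} [Group W] {M : CoxeterMatrix B}

/-- `α` is a link of rank `r`: a reduced expression of length `2r+1` whose braid class
has braid shadows exactly at the (0-based) positions `0, 2, 4, …, 2r-2`
(the 1-based intervals `⟦1,3⟧, ⟦3,5⟧, …, ⟦2r-1,2r+1⟧`). -/
def IsLink (cs : CoxeterSystem M W) (α : List B) (r : ℕ) : Prop :=
  cs.IsReduced α ∧ α.length = 2 * r + 1 ∧
    ∀ i : ℕ, ClassHasShadowAt M α i ↔ ∃ j < r, i = 2 * j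

/-- A Fibonacci link: a link all of whose braid-class braid shadows are braid shadows
of the link itself. -/
def IsFibLink (cs : CoxeterSystem M W) (φ : List B) (r : ℕ) : Prop :=
  IsLink cs φ r ∧ ∀ i : ℕ, ClassHasShadowAt M φ i → HasShadowAt M φ i


/-! ### Infrastructure for the proof -/

section Infra

open scoped Classical

lemma ne_of_M_eq_three {M : CoxeterMatrix B} {s t : B} (h : M s t = 3) : s ≠ t := by
  intro e; subst e; rw [M.diagonal] at h; omega

/-- A braid move at a specified position `j`. -/
def MoveAt (M : CoxeterMatrix B) (j : ℕ) (w w' : List B) : Prop :=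
  ∃ (u v : List B) (s t : B), M s t = 3 ∧ u.length = j ∧
    w = u ++ [s, t, s] ++ v ∧ w' = u ++ [t, s, t] ++ v

lemma isBraidMove_iff_moveAt {M : CoxeterMatrix B} {w w' : List B} :
    IsBraidMove M w w' ↔ ∃ j, MoveAt M j w w' := by
  constructor
  · rintro ⟨u, v, s, t, h3, rfl, rfl⟩
    exact ⟨u.length, u, v, s, t, h3, rfl, rfl, rfl⟩
  · rintro ⟨j, u, v, s, t, h3, hj, rfl, rfl⟩
    exact ⟨u, v, s, t, h3, rfl, rfl⟩

lemma MoveAt.symm {M : CoxeterMatrix B} {j : ℕ} {w w' : List B}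
    (h : MoveAt M j w w') : MoveAt M j w' w := by
  obtain ⟨u, v, s, t, h3, hj, rfl, rfl⟩ := h
  exact ⟨u, v, t, s, M.symmetric s t ▸ h3, hj, rfl, rfl⟩

lemma triple_getElem?_left {u v : List B} {x y z : B} {k : ℕ} (hk : k < u.length) :
    (u ++ [x, y, z] ++ v)[k]? = u[k]? := by
  rw [List.append_assoc, List.getElem?_append]
  simp [hk]

lemma triple_getElem?_right {u v : List B} {x y z : B} {k : ℕ} (hk : u.length + 2 < k) :
    (u ++ [x, y, z] ++ v)[k]? = v[k - u.length - 3]? := by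
  rw [List.append_assoc, List.getElem?_append_right (by omega)]
  rw [show k - u.length = (k - u.length - 3) + 3 by omega]
  simp

lemma triple_getElem?_0 {u v : List B} {x y z : B} :
    (u ++ [x, y, z] ++ v)[u.length]? = some x := by
  rw [List.append_assoc, List.getElem?_append_right (le_refl _)]; simp

lemma triple_getElem?_1 {u v : List B} {x y z : B} :
    (u ++ [x, y, z] ++ v)[u.length + 1]? = some y := by
  rw [List.append_assoc, List.getElem?_append_right (Nat.le_add_right _ _)]; simp

lemma triple_getElem?_2 {u v : List B} {x y z : B} :
    (u ++ [x, y, z] ++ v)[u.length + 2]? = some z := by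
  rw [List.append_assoc, List.getElem?_append_right (Nat.le_add_right _ _)]; simp

lemma MoveAt.getElem?_of_notin {M : CoxeterMatrix B} {j : ℕ} {w w' : List B}
    (h : MoveAt M j w w') {k : ℕ} (hk : k < j ∨ j + 2 < k) : w'[k]? = w[k]? := by
  obtain ⟨u, v, s, t, h3, hj, rfl, rfl⟩ := h
  subst hj
  rcases hk with hk | hk
  · rw [triple_getElem?_left hk, triple_getElem?_left hk]
  · rw [triple_getElem?_right hk, triple_getElem?_right hk]

lemma MoveAt.window {M : CoxeterMatrix B} {j : ℕ} {w w' : List B}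
    (h : MoveAt M j w w') : ∃ s t : B, M s t = 3 ∧
      w[j]? = some s ∧ w[j+1]? = some t ∧ w[j+2]? = some s ∧
      w'[j]? = some t ∧ w'[j+1]? = some s ∧ w'[j+2]? = some t := by
  obtain ⟨u, v, s, t, h3, hj, rfl, rfl⟩ := h
  subst hj
  exact ⟨s, t, h3, triple_getElem?_0, triple_getElem?_1, triple_getElem?_2,
    triple_getElem?_0, triple_getElem?_1, triple_getElem?_2⟩

lemma MoveAt.shadow_src {M : CoxeterMatrix B} {j : ℕ} {w w' : List B}
    (h : MoveAt M j w w') : HasShadowAt M w j := by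
  obtain ⟨s, t, h3, a1, a2, a3, _, _, _⟩ := h.window
  exact ⟨s, t, h3, a1, a2, a3⟩

lemma MoveAt.shadow_tgt {M : CoxeterMatrix B} {j : ℕ} {w w' : List B}
    (h : MoveAt M j w w') : HasShadowAt M w' j := h.symm.shadow_src

lemma MoveAt.length_eq {M : CoxeterMatrix B} {j : ℕ} {w w' : List B}
    (h : MoveAt M j w w') : w.length = w'.length := by
  obtain ⟨u, v, s, t, _, _, rfl, rfl⟩ := h
  simp

variable {W : Type*} [Group W] {M : CoxeterMatrix B}

lemma simple_triple_eq (cs : CoxeterSystem M W) {s t : B} (h : M s t = 3) :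
    cs.simple s * cs.simple t * cs.simple s = cs.simple t * cs.simple s * cs.simple t := by
  have h3 := cs.simple_mul_simple_pow s t
  rw [h] at h3
  have e : cs.simple s * cs.simple t * cs.simple s *
      (cs.simple t * cs.simple s * cs.simple t) = 1 := by
    rw [← h3, pow_succ, pow_succ, pow_one]; group
  rw [eq_inv_of_mul_eq_one_left e]
  simp [mul_inv_rev, cs.inv_simple, mul_assoc]

lemma MoveAt.wordProd_eq (cs : CoxeterSystem M W) {j : ℕ} {w w' : List B}
    (h : MoveAt M j w w') : cs.wordProd w = cs.wordProd w' := by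
  obtain ⟨u, v, s, t, h3, hj, rfl, rfl⟩ := h
  simp only [cs.wordProd_append]
  congr 2
  simp only [cs.wordProd_cons, cs.wordProd_nil, mul_one, ← mul_assoc]
  exact simple_triple_eq cs h3

lemma MoveAt.isReduced_iff (cs : CoxeterSystem M W) {j : ℕ} {w w' : List B}
    (h : MoveAt M j w w') : (cs.IsReduced w ↔ cs.IsReduced w') := by
  unfold CoxeterSystem.IsReduced
  rw [h.wordProd_eq cs, h.length_eq]

lemma isReduced_infix (cs : CoxeterSystem M W) {u x v : List B}
    (h : cs.IsReduced (u ++ x ++ v)) : cs.IsReduced x := by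
  unfold CoxeterSystem.IsReduced at *
  simp only [cs.wordProd_append, List.length_append] at h
  have h1 := cs.length_wordProd_le u
  have h2 := cs.length_wordProd_le x
  have h3 := cs.length_wordProd_le v
  have key : cs.length (cs.wordProd u * cs.wordProd x * cs.wordProd v) ≤
      cs.length (cs.wordProd u) + cs.length (cs.wordProd x) + cs.length (cs.wordProd v) := by
    calc cs.length (cs.wordProd u * cs.wordProd x * cs.wordProd v)
        ≤ cs.length (cs.wordProd u * cs.wordProd x) + cs.length (cs.wordProd v) :=
          cs.length_mul_le _ _
      _ ≤ cs.length (cs.wordProd u) + cs.length (cs.wordProd x) + cs.length (cs.wordProd v) := by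
          have := cs.length_mul_le (cs.wordProd u) (cs.wordProd x); omega
  omega

lemma not_isReduced_stst (cs : CoxeterSystem M W) {s t : B} (h : M s t = 3)
    (P S : List B) : ¬ cs.IsReduced (P ++ [s, t, s, t] ++ S) := by
  intro hred
  have h4 : cs.IsReduced [s, t, s, t] := isReduced_infix cs hred
  unfold CoxeterSystem.IsReduced at h4
  have e : cs.wordProd [s, t, s, t] = cs.simple t * cs.simple s := by
    have h3 := cs.simple_mul_simple_pow s t
    rw [h] at h3
    have e2 : cs.wordProd [s,t,s,t] * (cs.simple s * cs.simple t) = 1 := by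
      simp only [CoxeterSystem.wordProd_cons, CoxeterSystem.wordProd_nil, mul_one]
      rw [← h3, pow_succ, pow_succ, pow_one]; group
    rw [eq_inv_of_mul_eq_one_left e2]
    simp [mul_inv_rev, cs.inv_simple]
  rw [e] at h4
  have := cs.length_mul_le (cs.simple t) (cs.simple s)
  simp [cs.length_simple] at this h4
  omega

/-- A chain of braid moves, as a function on indices. -/
def ChainM (M : CoxeterMatrix B) (γ : ℕ → List B) (N : ℕ) : Prop :=
  ∀ k, k < N → ∃ j, MoveAt M j (γ k) (γ (k+1))

lemma ChainM.sub {γ : ℕ → List B} {N : ℕ} (h : ChainM M γ N) (i L : ℕ) (hiL : i + L ≤ N) :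
    ChainM M (fun k => γ (i + k)) L := by
  intro k hk
  obtain ⟨j, hj⟩ := h (i + k) (by omega)
  refine ⟨j, ?_⟩
  simp only []
  rw [show i + (k + 1) = i + k + 1 by omega]
  exact hj

lemma ChainM.rev {γ : ℕ → List B} {N : ℕ} (h : ChainM M γ N) :
    ChainM M (fun k => γ (N - k)) N := by
  intro k hk
  obtain ⟨j, hj⟩ := h (N - k - 1) (by omega)
  refine ⟨j, ?_⟩
  simp only []
  rw [show N - (k + 1) = N - k - 1 by omega, show N - k = N - k - 1 + 1 by omega]
  exact hj.symm

lemma ChainM.red (cs : CoxeterSystem M W) {γ : ℕ → List B} {N : ℕ} (h : ChainM M γ N)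
    (h0 : cs.IsReduced (γ 0)) : ∀ k, k ≤ N → cs.IsReduced (γ k) := by
  intro k hk
  induction k with
  | zero => exact h0
  | succ n ih =>
    obtain ⟨j, hj⟩ := h n (by omega)
    exact (hj.isReduced_iff cs).1 (ih (by omega))

/-- Freezing: if no move in the chain touches position `p`, the letter at `p` is constant. -/
lemma ChainM.frozen {γ : ℕ → List B} {N : ℕ} (h : ChainM M γ N) (p : ℕ)
    (hne : ∀ k, k < N → ∀ j, MoveAt M j (γ k) (γ (k+1)) → ¬(j ≤ p ∧ p ≤ j + 2)) :
    ∀ k, k ≤ N → (γ k)[p]? = (γ 0)[p]? := by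
  intro k hk
  induction k with
  | zero => rfl
  | succ n ih =>
    obtain ⟨j, hj⟩ := h n (by omega)
    rw [hj.getElem?_of_notin (by have := hne n (by omega) j hj; omega)]
    exact ih (by omega)

/-- Extract a contiguous factor of a word from positional information. -/
lemma eq_factor_of_getElem? {w pat : List B} {q : ℕ} (hne : pat ≠ [])
    (h : ∀ jj, jj < pat.length → w[q + jj]? = pat[jj]?) :
    ∃ P S : List B, P.length = q ∧ w = P ++ pat ++ S := by
  have hplen : 0 < pat.length := List.length_pos_iff.2 hne
  have hlast := h (pat.length - 1) (by omega)
  have hwlen : q + pat.length ≤ w.length := by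
    have hsome : pat[pat.length - 1]? = some (pat.getLast hne) := by
      rw [List.getLast_eq_getElem]
      exact List.getElem?_eq_getElem _
    rw [hsome] at hlast
    obtain ⟨hlt, -⟩ := List.getElem?_eq_some_iff.1 hlast
    omega
  refine ⟨w.take q, w.drop (q + pat.length), by rw [List.length_take]; omega, ?_⟩
  apply List.ext_getElem?
  intro n
  have htq : (w.take q).length = q := by rw [List.length_take]; omega
  by_cases h1 : n < q
  · rw [List.append_assoc, List.getElem?_append, htq, if_pos h1, List.getElem?_take, if_pos h1]
  · rw [List.append_assoc, List.getElem?_append, htq, if_neg h1]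
    by_cases h2 : n < q + pat.length
    · rw [List.getElem?_append, if_pos (by omega)]
      have := h (n - q) (by omega)
      rw [show q + (n - q) = n by omega] at this
      exact this
    · rw [List.getElem?_append, if_neg (by omega), List.getElem?_drop]
      congr 1
      omega

end Infra


section Pattern

variable {W : Type*} [Group W] {M : CoxeterMatrix B}

/-- The alternating tail pattern produced by an import cascade. -/
def TailP (a : B) : List B → List B
  | [] => []
  | [x] => [x, a, x]
  | x :: y :: xs => x :: a :: TailP x (y :: xs)

/-- Adjacency condition for the cascade letters. -/
def AdjC (M : CoxeterMatrix B) : B → List B → Prop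
  | _, [] => True
  | a, x :: xs => M x a = 3 ∧ AdjC M x xs

lemma TailP_cons₂ (a x : B) {L : List B} (hL : L ≠ []) :
    TailP a (x :: L) = x :: a :: TailP x L := by
  cases L with
  | nil => exact absurd rfl hL
  | cons y ys => rfl

lemma TailP_ne_nil (a : B) {xs : List B} (h : xs ≠ []) : TailP a xs ≠ [] := by
  cases xs with
  | nil => exact absurd rfl h
  | cons x ys => cases ys with
    | nil => simp [TailP]
    | cons y zs => simp [TailP]

lemma TailP_snoc (a : B) : ∀ (ws : List B) (z y : B),
    TailP a (ws ++ [z] ++ [y]) = (TailP a (ws ++ [z])).dropLast ++ [y, z, y] := by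
  intro ws
  induction ws generalizing a with
  | nil => intro z y; simp [TailP]
  | cons x ws' ih =>
    intro z y
    have h1 : (ws' ++ [z] ++ [y]) ≠ [] := by simp
    have h2 : (ws' ++ [z]) ≠ [] := by simp
    rw [show (x :: ws') ++ [z] ++ [y] = x :: (ws' ++ [z] ++ [y]) by simp,
        TailP_cons₂ a x h1, ih x z y,
        show (x :: ws') ++ [z] = x :: (ws' ++ [z]) by simp,
        TailP_cons₂ a x h2]
    have h3 : TailP x (ws' ++ [z]) ≠ [] := TailP_ne_nil x h2
    rw [show (x :: a :: TailP x (ws' ++ [z])).dropLast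
          = x :: a :: (TailP x (ws' ++ [z])).dropLast by
        cases hE : TailP x (ws' ++ [z]) with
        | nil => exact absurd hE h3
        | cons c L => simp]
    simp

lemma TailP_dropLast_append (a : B) : ∀ (ws : List B) (z : B),
    (TailP a (ws ++ [z])).dropLast ++ [z] = TailP a (ws ++ [z]) := by
  intro ws
  induction ws generalizing a with
  | nil => intro z; simp [TailP]
  | cons x ws' ih =>
    intro z
    have h2 : (ws' ++ [z]) ≠ [] := by simp
    rw [show (x :: ws') ++ [z] = x :: (ws' ++ [z]) by simp, TailP_cons₂ a x h2]
    have h3 : TailP x (ws' ++ [z]) ≠ [] := TailP_ne_nil x h2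
    rw [show (x :: a :: TailP x (ws' ++ [z])).dropLast
          = x :: a :: (TailP x (ws' ++ [z])).dropLast by
        cases hE : TailP x (ws' ++ [z]) with
        | nil => exact absurd hE h3
        | cons c L => simp]
    simp [ih x z]

lemma AdjC_snoc {a : B} : ∀ {ws : List B} {z y : B},
    AdjC M a (ws ++ [z] ++ [y]) → M y z = 3 ∧ AdjC M a (ws ++ [z]) := by
  intro ws
  induction ws generalizing a with
  | nil => intro z y h; exact ⟨h.2.1, h.1, trivial⟩
  | cons x ws' ih =>
    intro z y h
    rw [show (x :: ws') ++ [z] ++ [y] = x :: (ws' ++ [z] ++ [y]) by simp] at h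
    obtain ⟨h1, h2⟩ := h
    obtain ⟨h3, h4⟩ := ih h2
    exact ⟨h3, h1, h4⟩

/-- Key non-reducedness lemma: a reduced word cannot contain the pattern
`[s,t,s] ++ TailP t xs`. -/
lemma not_red_pattern (cs : CoxeterSystem M W) {s t : B} (hst : M s t = 3) :
    ∀ n (xs : List B), xs.length = n → xs ≠ [] → AdjC M t xs →
      ∀ P S, ¬ cs.IsReduced (P ++ ([s, t, s] ++ TailP t xs) ++ S) := by
  intro n
  induction n with
  | zero => intro xs hlen hne; exact absurd (List.length_eq_zero_iff.1 hlen) hne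
  | succ n ih =>
    intro xs hlen hne hadj P S hred
    obtain ⟨ws, z, hxs⟩ := List.eq_nil_or_concat xs |>.resolve_left hne
    rw [List.concat_eq_append] at hxs
    subst hxs
    cases hws : ws with
    | nil =>
      subst hws
      simp only [List.nil_append] at hadj hred
      obtain ⟨hzt, -⟩ := hadj
      have hmove : MoveAt M (P ++ [s, t, s]).length
          (P ++ ([s, t, s] ++ TailP t [z]) ++ S)
          ((P ++ [s, t, s]) ++ [t, z, t] ++ S) := by
        refine ⟨P ++ [s, t, s], S, z, t, hzt, rfl, ?_, rfl⟩
        rw [show TailP t [z] = [z, t, z] from rfl]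
        simp
      rw [hmove.isReduced_iff cs] at hred
      refine not_isReduced_stst cs hst P ([z, t] ++ S) ?_
      have heq : (P ++ [s, t, s]) ++ [t, z, t] ++ S = P ++ [s, t, s, t] ++ ([z, t] ++ S) := by
        simp
      rwa [heq] at hred
    | cons x ws' =>
      have hwsne : ws ≠ [] := by rw [hws]; simp
      obtain ⟨ws'', z₂, hW⟩ := List.eq_nil_or_concat ws |>.resolve_left hwsne
      rw [List.concat_eq_append] at hW
      clear hws
      subst hW
      obtain ⟨hz2, hadj'⟩ := AdjC_snoc (a := t) hadj
      have hT : TailP t (ws'' ++ [z₂] ++ [z])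
          = (TailP t (ws'' ++ [z₂])).dropLast ++ [z, z₂, z] := TailP_snoc t ws'' z₂ z
      rw [hT] at hred
      set D := (TailP t (ws'' ++ [z₂])).dropLast with hD
      have hmove : MoveAt M (P ++ [s, t, s] ++ D).length
          (P ++ ([s, t, s] ++ (D ++ [z, z₂, z])) ++ S)
          ((P ++ [s, t, s] ++ D) ++ [z₂, z, z₂] ++ S) := by
        refine ⟨P ++ [s, t, s] ++ D, S, z, z₂, hz2, rfl, ?_, rfl⟩
        simp
      rw [hmove.isReduced_iff cs] at hred
      have hEq : (P ++ [s, t, s] ++ D) ++ [z₂, z, z₂] ++ S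
          = P ++ ([s, t, s] ++ TailP t (ws'' ++ [z₂])) ++ ([z, z₂] ++ S) := by
        rw [show TailP t (ws'' ++ [z₂]) = D ++ [z₂] from (TailP_dropLast_append t ws'' z₂).symm]
        simp
      rw [hEq] at hred
      exact ih (ws'' ++ [z₂]) (by simpa using hlen) (by simp) hadj' P ([z, z₂] ++ S) hred

end Pattern


section Imp

variable {W : Type*} [Group W] {M : CoxeterMatrix B}

/-- Equality of shadow windows (possibly swapped). -/
def WinEq (w v : List B) (q : ℕ) : Prop :=
  (w[q]? = v[q]? ∧ w[q+1]? = v[q+1]?) ∨ (w[q]? = v[q+1]? ∧ w[q+1]? = v[q]?)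

lemma ChainM.mono {γ : ℕ → List B} {N N' : ℕ} (h : ChainM M γ N) (hle : N' ≤ N) :
    ChainM M γ N' := fun k hk => h k (lt_of_lt_of_le hk hle)

/-- The import-cascade lemma. -/
lemma imp_cascade (cs : CoxeterSystem M W) :
    ∀ K (γ : ℕ → List B), ChainM M γ K →
    ∀ (r : ℕ) (a b : B), M a b = 3 →
    (∀ k, k ≤ K → (γ k)[r]? = some a ∧ (γ k)[r+1]? = some b) →
    (γ 0)[r+2]? ≠ some a → (γ K)[r+2]? = some a →
    (∀ i j p, i < K → j < K → HasShadowAt M (γ i) p → HasShadowAt M (γ j) (p+1) → False) →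
    (∀ i j p, i < K → j < K → HasShadowAt M (γ i) p → HasShadowAt M (γ j) p →
      WinEq (γ i) (γ j) p) →
    ∃ xs : List B, xs ≠ [] ∧ AdjC M a xs ∧
      ∀ jj c, (TailP a xs)[jj]? = some c → (γ 0)[r + 2 + jj]? = some c := by
  intro K
  induction K using Nat.strong_induction_on with
  | _ K IH =>
  intro γ hch r a b hab hw h0 hK ambA ambB
  classical
  -- moves never touch the wall positions r, r+1
  have hwallmove : ∀ k, k < K → ∀ j, MoveAt M j (γ k) (γ (k+1)) → j + 2 < r ∨ r + 1 < j := by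
    intro k hk j hmv
    by_contra hcon
    push_neg at hcon
    obtain ⟨hc1, hc2⟩ := hcon
    obtain ⟨s', t', h3, a1, a2, a3, b1, b2, b3⟩ := hmv.window
    have hne := ne_of_M_eq_three h3
    obtain ⟨w1k, w2k⟩ := hw k (le_of_lt hk)
    obtain ⟨w1k', w2k'⟩ := hw (k+1) hk
    rcases Nat.lt_or_ge j r with hjr | hjr
    · -- j < r ≤ j + 2 : r = j+1 or r = j+2
      rcases (by omega : r = j + 1 ∨ r = j + 2) with hr | hr
      · subst hr
        rw [a2] at w1k; rw [b2] at w1k'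
        exact hne (by rw [Option.some_inj.1 w1k, Option.some_inj.1 w1k'])
      · subst hr
        rw [a3] at w1k; rw [b3] at w1k'
        exact hne (by rw [Option.some_inj.1 w1k, Option.some_inj.1 w1k'])
    · -- r ≤ j ≤ r + 1
      rcases (by omega : j = r ∨ j = r + 1) with hr | hr
      · subst hr
        rw [a1] at w1k; rw [b1] at w1k'
        exact hne (by rw [Option.some_inj.1 w1k, Option.some_inj.1 w1k'])
      · rw [← hr] at w2k w2k'
        rw [a1] at w2k; rw [b1] at w2k'
        exact hne (by rw [Option.some_inj.1 w2k, Option.some_inj.1 w2k'])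
  -- the first time position r+2 carries the letter a
  have hex : ∃ k, (γ k)[r+2]? = some a := ⟨K, hK⟩
  set kstar := Nat.find hex with hkstar
  have hkspec : (γ kstar)[r+2]? = some a := Nat.find_spec hex
  have hksle : kstar ≤ K := Nat.find_min' hex hK
  have hksmin : ∀ m, m < kstar → (γ m)[r+2]? ≠ some a := fun m hm => Nat.find_min hex hm
  have hks1 : 1 ≤ kstar := by
    rcases Nat.eq_zero_or_pos kstar with h | h
    · rw [h] at hkspec; exact absurd hkspec h0
    · exact h
  -- the move into γ kstar is at position r+2
  obtain ⟨j0, hj0⟩ : ∃ j, MoveAt M j (γ (kstar - 1)) (γ kstar) := by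
    obtain ⟨j, hj⟩ := hch (kstar - 1) (by omega)
    rw [show kstar - 1 + 1 = kstar by omega] at hj
    exact ⟨j, hj⟩
  have hj0eq : j0 = r + 2 := by
    by_contra hne'
    have hchange : (γ (kstar - 1))[r+2]? ≠ (γ kstar)[r+2]? := by
      rw [hkspec]; exact hksmin (kstar - 1) (by omega)
    have hj0r : j0 + 2 < r ∨ r + 1 < j0 := by
      have := hwallmove (kstar - 1) (by omega) j0
      rw [show kstar - 1 + 1 = kstar by omega] at this
      exact this hj0
    rcases Nat.lt_or_ge (r+2) j0 with h | h
    · exact hchange (hj0.getElem?_of_notin (Or.inl h)).symm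
    · have : j0 + 2 < r + 2 := by omega
      exact hchange (hj0.getElem?_of_notin (Or.inr this)).symm
  subst hj0eq
  obtain ⟨x₁, t', h3x, a1, a2, a3, b1, b2, b3⟩ := hj0.window
  have ht'a : t' = a := by
    rw [hkspec] at b1; exact (Option.some_inj.1 b1).symm
  rw [ht'a] at h3x a2 b3
  have hx₁a : x₁ ≠ a := ne_of_M_eq_three h3x
  -- no r+2-moves strictly before the import
  have hno_r2 : ∀ k, k + 1 < kstar → ¬ MoveAt M (r+2) (γ k) (γ (k+1)) := by
    intro k hk1 hmv
    have hks1K : kstar - 1 < K := by omega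
    have hkK : k < K := by omega
    have hWE := ambB k (kstar - 1) (r+2) hkK hks1K hmv.shadow_src hj0.shadow_src
    obtain ⟨σ, τ, h3', c1, c2, c3, d1, d2, d3⟩ := hmv.window
    have hσ : (γ k)[r+2]? = some σ := c1
    have hτ : (γ k)[r+3]? = some τ := by
      rw [show r + 3 = r + 2 + 1 by omega]; exact c2
    rcases hWE with ⟨e1, e2⟩ | ⟨e1, e2⟩
    · -- aligned: the move at step k+1 would import `a` too early
      have hτ : some τ = some a := by
        rw [← c2, e2]; exact a2
      have : (γ (k+1))[r+2]? = some a := by rw [d1, Option.some_inj.1 hτ]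
      exact hksmin (k+1) hk1 this
    · -- swapped: position r+2 already carries `a` at time k
      exact hksmin k (by omega) (e1.trans a2)
  -- freeze r+2 and r+3 on [0, kstar-1]
  have hfr2 : ∀ k, k ≤ kstar - 1 → (γ k)[r+2]? = some x₁ := by
    have hfr := ChainM.frozen (hch.mono (show kstar - 1 ≤ K by omega)) (r+2) ?_
    · intro k hk
      rw [hfr k hk, ← hfr (kstar - 1) (le_refl _)]
      exact a1
    · intro k hk j hj hcon
      have hj' := hwallmove k (by omega) j hj
      have : j = r + 2 := by omega
      subst this
      exact hno_r2 k (by omega) hj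
  have hfr3 : ∀ k, k ≤ kstar - 1 → (γ k)[r+3]? = some a := by
    have hfr := ChainM.frozen (hch.mono (show kstar - 1 ≤ K by omega)) (r+3) ?_
    · intro k hk
      rw [hfr k hk, ← hfr (kstar - 1) (le_refl _)]
      rw [show r + 3 = r + 2 + 1 by omega]
      exact a2
    · intro k hk j hj hcon
      have hj' := hwallmove k (by omega) j hj
      have : j = r + 2 ∨ j = r + 3 := by omega
      rcases this with h | h
      · subst h; exact hno_r2 k (by omega) hj
      · subst h
        -- an (r+3)-move means a shadow at r+3 adjacent to the shadow of γ (kstar-1) at r+2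
        exact ambA (kstar - 1) k (r+2) (by omega) (by omega) hj0.shadow_src hj.shadow_src
  by_cases hc : (γ 0)[r+4]? = some x₁
  · -- terminal case
    refine ⟨[x₁], by simp, ⟨h3x, trivial⟩, ?_⟩
    intro jj c hjj
    have h2 : TailP a [x₁] = [x₁, a, x₁] := rfl
    rw [h2] at hjj
    rcases jj with _ | _ | _ | n
    · simp at hjj; rw [show r + 2 + 0 = r + 2 by omega, hfr2 0 (by omega), hjj]
    · simp at hjj; rw [show r + 2 + 1 = r + 3 by omega, hfr3 0 (by omega), hjj]
    · simp at hjj; rw [show r + 2 + 2 = r + 4 by omega, ← hjj]; exact hc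
    · simp at hjj
  · -- recursive case
    have hK' : kstar - 1 < K := by omega
    have hrec := IH (kstar - 1) hK' γ (hch.mono (by omega)) (r+2) x₁ a h3x
      (fun k hk => ⟨hfr2 k hk, hfr3 k hk⟩)
      (by rw [show r + 2 + 2 = r + 4 by omega]; exact hc)
      (by rw [show r + 2 + 2 = r + 4 by omega,
          show r + 4 = r + 2 + 2 by omega]; exact a3)
      (fun i j p hi hj hsi hsj => ambA i j p (by omega) (by omega) hsi hsj)
      (fun i j p hi hj hsi hsj => ambB i j p (by omega) (by omega) hsi hsj)
    obtain ⟨xs', hne', hadj', hcov'⟩ := hrec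
    refine ⟨x₁ :: xs', by simp, ⟨h3x, hadj'⟩, ?_⟩
    intro jj c hjj
    rw [TailP_cons₂ a x₁ hne'] at hjj
    rcases jj with _ | _ | n
    · simp at hjj; rw [show r + 2 + 0 = r + 2 by omega, hfr2 0 (by omega), hjj]
    · simp at hjj; rw [show r + 2 + 1 = r + 3 by omega, hfr3 0 (by omega), hjj]
    · have : (TailP x₁ xs')[n]? = some c := by
        simpa using hjj
      have := hcov' n c this
      rw [show r + 2 + (n + 1 + 1) = r + 2 + 2 + n by omega]
      exact this
end Imp


section AB

variable {W : Type*} [Group W] {M : CoxeterMatrix B}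

lemma winEq_refl (w : List B) (q : ℕ) : WinEq w w q := Or.inl ⟨rfl, rfl⟩

lemma WinEq.trans' {w v u : List B} {q : ℕ} (h1 : WinEq w v q) (h2 : WinEq v u q) :
    WinEq w u q := by
  rcases h1 with ⟨e1, e2⟩ | ⟨e1, e2⟩ <;> rcases h2 with ⟨f1, f2⟩ | ⟨f1, f2⟩
  · exact Or.inl ⟨e1.trans f1, e2.trans f2⟩
  · exact Or.inr ⟨e1.trans f1, e2.trans f2⟩
  · exact Or.inr ⟨e1.trans f2, e2.trans f1⟩
  · exact Or.inl ⟨e1.trans f2, e2.trans f1⟩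

/-- Adjacent shadows in a single reduced word are impossible. -/
lemma base_adjacent (cs : CoxeterSystem M W) {w : List B} (hred : cs.IsReduced w)
    {q : ℕ} (h1 : HasShadowAt M w q) (h2 : HasShadowAt M w (q+1)) : False := by
  obtain ⟨s, t, hst, a1, a2, a3⟩ := h1
  obtain ⟨s', t', hst', b1, b2, b3⟩ := h2
  have hs' : s' = t := by
    rw [a2] at b1; exact (Option.some_inj.1 b1).symm
  have b3' : w[q + 3]? = some t := by
    rw [show q + 3 = q + 1 + 2 by omega, b3, hs']
  have hfac : ∀ jj, jj < ([s, t, s, t] : List B).length → w[q + jj]? = [s, t, s, t][jj]? := by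
    intro jj hjj
    rcases jj with _ | _ | _ | _ | n
    · simpa using a1
    · simpa using a2
    · simpa using a3
    · simpa using b3'
    · exfalso; simp only [List.length_cons, List.length_nil] at hjj; omega
  obtain ⟨P, S, hP, hw⟩ := eq_factor_of_getElem? (by simp) hfac
  rw [hw] at hred
  exact not_isReduced_stst cs hst P S hred

/-- The main mutual induction: no adjacent shadows across a braid chain (A),
and window equality for equal shadow positions (B). -/
theorem AB_main (cs : CoxeterSystem M W) (htf : TriangleFree M) :
    ∀ N (γ : ℕ → List B), ChainM M γ N → cs.IsReduced (γ 0) → ∀ q : ℕ,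
      (HasShadowAt M (γ 0) q → HasShadowAt M (γ N) (q+1) → False) ∧
      (HasShadowAt M (γ 0) q → HasShadowAt M (γ N) q → WinEq (γ 0) (γ N) q) := by
  intro N
  induction N using Nat.strong_induction_on with
  | _ N IH =>
  intro γ hch hred0 q
  classical
  have hred : ∀ k, k ≤ N → cs.IsReduced (γ k) := hch.red cs hred0
  -- IH in convenient pairwise form (for indices within the chain)
  have IHA : ∀ i j, i ≤ N → j ≤ N → (i ≠ j ∨ True) → i - j + (j - i) < N →
      ∀ p, HasShadowAt M (γ i) p → HasShadowAt M (γ j) (p+1) → False := by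
    intro i j hi hj _ hlt p hsi hsj
    rcases Nat.le_total i j with hij | hij
    · have L : j - i < N := by omega
      have := (IH (j - i) L (fun m => γ (i + m)) (hch.sub i (j - i) (by omega))
        (hred i hi) p).1
      beta_reduce at this
      rw [Nat.add_zero, show i + (j - i) = j by omega] at this
      exact this hsi hsj
    · have L : i - j < N := by omega
      have hch' : ChainM M (fun m => γ (i - m)) (i - j) := by
        intro k hk
        obtain ⟨jj, hjj⟩ := hch (i - k - 1) (by omega)
        refine ⟨jj, ?_⟩
        simp only []
        rw [show i - (k + 1) = i - k - 1 by omega, show i - k = i - k - 1 + 1 by omega]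
        exact hjj.symm
      have := (IH (i - j) L (fun m => γ (i - m)) hch' (by
        beta_reduce; rw [Nat.sub_zero]; exact hred i hi) p).1
      beta_reduce at this
      rw [Nat.sub_zero, show i - (i - j) = j by omega] at this
      exact this hsi hsj
  have IHB : ∀ i j, i ≤ N → j ≤ N → i - j + (j - i) < N →
      ∀ p, HasShadowAt M (γ i) p → HasShadowAt M (γ j) p → WinEq (γ i) (γ j) p := by
    intro i j hi hj hlt p hsi hsj
    rcases Nat.le_total i j with hij | hij
    · have L : j - i < N := by omega
      have := (IH (j - i) L (fun m => γ (i + m)) (hch.sub i (j - i) (by omega))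
        (hred i hi) p).2
      beta_reduce at this
      rw [Nat.add_zero, show i + (j - i) = j by omega] at this
      exact this hsi hsj
    · have L : i - j < N := by omega
      have hch' : ChainM M (fun m => γ (i - m)) (i - j) := by
        intro k hk
        obtain ⟨jj, hjj⟩ := hch (i - k - 1) (by omega)
        refine ⟨jj, ?_⟩
        simp only []
        rw [show i - (k + 1) = i - k - 1 by omega, show i - k = i - k - 1 + 1 by omega]
        exact hjj.symm
      have := (IH (i - j) L (fun m => γ (i - m)) hch' (by
        beta_reduce; rw [Nat.sub_zero]; exact hred i hi) p).2
      beta_reduce at this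
      rw [Nat.sub_zero, show i - (i - j) = j by omega] at this
      exact this hsi hsj
  constructor
  -- ===================== PART A =====================
  · intro hs0 hsN
    rcases Nat.eq_zero_or_pos N with hN0 | hNpos
    · subst hN0; exact base_adjacent cs hred0 hs0 hsN
    obtain ⟨s, t, hst, a1, a2, a3⟩ := hs0
    -- shadow exclusions
    have noShQ1 : ∀ k, k < N → ¬ HasShadowAt M (γ k) (q+1) := by
      intro k hk hsk
      exact IHA 0 k (by omega) (by omega) (Or.inr trivial) (by omega) q ⟨s, t, hst, a1, a2, a3⟩ hsk
    have noShQ : ∀ k, 1 ≤ k → k ≤ N → ¬ HasShadowAt M (γ k) q := by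
      intro k hk1 hkN hsk
      exact IHA k N hkN (le_refl N) (Or.inr trivial) (by omega) q hsk hsN
    have noShQm1 : ∀ k, k < N → ∀ p, p + 1 = q → ¬ HasShadowAt M (γ k) p := by
      intro k hk p hp hsk
      exact IHA k 0 (by omega) (by omega) (Or.inr trivial) (by omega) p hsk
        (by rw [hp]; exact ⟨s, t, hst, a1, a2, a3⟩)
    have noShQ2 : ∀ k, 1 ≤ k → k ≤ N → ¬ HasShadowAt M (γ k) (q+2) := by
      intro k hk1 hkN hsk
      exact IHA N k (le_refl N) hkN (Or.inr trivial) (by omega) (q+1) hsN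
        (by rw [show q + 1 + 1 = q + 2 by omega]; exact hsk)
    -- no moves in the window region [q-1, q+2]
    have hfreeze : ∀ k, k < N → ∀ j, MoveAt M j (γ k) (γ (k+1)) →
        j + 2 < q + 1 ∨ q + 2 < j := by
      intro k hk j hj
      by_contra hcon
      push_neg at hcon
      obtain ⟨hc1, hc2⟩ := hcon
      have hcase : j = q + 2 ∨ j = q + 1 ∨ j = q ∨ (q ≥ 1 ∧ j + 1 = q) := by omega
      rcases hcase with h | h | h | ⟨hq1, h⟩
      · subst h
        rcases Nat.eq_zero_or_pos k with rfl | hk1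
        · exact noShQ2 1 (by omega) (by omega) hj.shadow_tgt
        · exact noShQ2 k (by omega) (by omega) hj.shadow_src
      · subst h
        exact noShQ1 k hk hj.shadow_src
      · subst h
        rcases Nat.eq_zero_or_pos k with rfl | hk1
        · exact noShQ (0+1) (by omega) (by omega) hj.shadow_tgt
        · exact noShQ k (by omega) (by omega) hj.shadow_src
      · exact noShQm1 k hk j h hj.shadow_src
    have hwall1 : ∀ k, k ≤ N → (γ k)[q+1]? = some t := by
      have := ChainM.frozen hch (q+1) ?_
      · intro k hk; rw [this k hk]; exact a2
      · intro k hk j hj hcon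
        have := hfreeze k hk j hj; omega
    have hwall2 : ∀ k, k ≤ N → (γ k)[q+2]? = some s := by
      have := ChainM.frozen hch (q+2) ?_
      · intro k hk; rw [this k hk]; exact a3
      · intro k hk j hj hcon
        have := hfreeze k hk j hj; omega
    obtain ⟨g, h, hgh, e1, e2, e3⟩ := hsN
    have hg : g = t := by
      have := hwall1 N (le_refl N); rw [e1] at this; exact Option.some_inj.1 this
    have h03 : (γ 0)[q+3]? ≠ some t := by
      intro hbad
      have hfac : ∀ jj, jj < ([s, t, s, t] : List B).length →
          (γ 0)[q + jj]? = [s, t, s, t][jj]? := by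
        intro jj hjj
        rcases jj with _ | _ | _ | _ | n
        · simpa using a1
        · simpa using a2
        · simpa using a3
        · simpa using hbad
        · exfalso; simp only [List.length_cons, List.length_nil] at hjj; omega
      obtain ⟨P, S, hP, hw⟩ := eq_factor_of_getElem? (by simp) hfac
      rw [hw] at hred0
      exact not_isReduced_stst cs hst P S hred0
    have hN3 : (γ N)[q+3]? = some t := by
      rw [show q + 3 = q + 1 + 2 by omega, e3, hg]
    -- apply the cascade lemma
    obtain ⟨xs, hxne, hadj, hcov⟩ := imp_cascade cs N γ hch (q+1) t s (M.symmetric s t ▸ hst)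
      (fun k hk => ⟨hwall1 k hk, hwall2 k hk⟩)
      (by rw [show q + 1 + 2 = q + 3 by omega]; exact h03)
      (by rw [show q + 1 + 2 = q + 3 by omega]; exact hN3)
      (fun i j p hi hj hsi hsj =>
        IHA i j (by omega) (by omega) (Or.inr trivial) (by omega) p hsi hsj)
      (fun i j p hi hj hsi hsj =>
        IHB i j (by omega) (by omega) (by omega) p hsi hsj)
    -- the pattern sits inside γ 0, contradicting reducedness
    set pat := [s, t, s] ++ TailP t xs with hpat
    have hfac : ∀ jj, jj < pat.length → (γ 0)[q + jj]? = pat[jj]? := by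
      intro jj hjj
      rcases jj with _ | _ | _ | n
      · simpa [hpat] using a1
      · simpa [hpat] using a2
      · simpa [hpat] using a3
      · have hn : n < (TailP t xs).length := by
          simp [hpat] at hjj; omega
        have hsome : (TailP t xs)[n]? = some ((TailP t xs).get ⟨n, hn⟩) := by
          simp
        have := hcov n _ hsome
        rw [show q + 1 + 2 + n = q + (n + 1 + 1 + 1) by omega] at this
        rw [this, hpat]
        rw [List.getElem?_append_right (by simp)]
        simp [hsome]
    obtain ⟨P, S, hP, hw⟩ := eq_factor_of_getElem? (by simp [hpat]) hfac
    rw [hw, hpat] at hred0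
    exact not_red_pattern cs hst xs.length xs rfl hxne hadj P S hred0
  -- ===================== PART B =====================
  · intro hs0 hsN
    rcases Nat.eq_zero_or_pos N with hN0 | hNpos
    · subst hN0; exact winEq_refl _ _
    obtain ⟨s, t, hst, a1, a2, a3⟩ := hs0
    by_cases hqmove : ∃ k, k < N ∧ MoveAt M q (γ k) (γ (k+1))
    · -- split at a q-move
      obtain ⟨k, hkN, hmv⟩ := hqmove
      have w1 : WinEq (γ 0) (γ k) q :=
        IHB 0 k (by omega) (by omega) (by omega) q ⟨s, t, hst, a1, a2, a3⟩ hmv.shadow_src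
      have w2 : WinEq (γ k) (γ (k+1)) q := by
        obtain ⟨σ, τ, h3, c1, c2, c3, d1, d2, d3⟩ := hmv.window
        exact Or.inr ⟨by rw [c1, d2], by rw [c2, d1]⟩
      have w3 : WinEq (γ (k+1)) (γ N) q :=
        IHB (k+1) N (by omega) (le_refl N) (by omega) q hmv.shadow_tgt hsN
      exact (w1.trans' w2).trans' w3
    · push_neg at hqmove
      obtain ⟨x, z, hxz, b1, b2, b3⟩ := hsN
      -- exclusions
      have noShQ1 : ∀ k, k < N → ¬ HasShadowAt M (γ k) (q+1) := by
        intro k hk hsk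
        exact IHA 0 k (by omega) (by omega) (Or.inr trivial) (by omega) q
          ⟨s, t, hst, a1, a2, a3⟩ hsk
      have noShQm1 : ∀ k, k < N → ∀ p, p + 1 = q → ¬ HasShadowAt M (γ k) p := by
        intro k hk p hp hsk
        exact IHA k 0 (by omega) (by omega) (Or.inr trivial) (by omega) p hsk
          (by rw [hp]; exact ⟨s, t, hst, a1, a2, a3⟩)
      have hfq1 : ∀ k, k < N → ∀ j, MoveAt M j (γ k) (γ (k+1)) →
          ¬(j ≤ q + 1 ∧ q + 1 ≤ j + 2) := by
        intro k hk j hj hcon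
        have hcase : j = q + 1 ∨ j = q ∨ (q ≥ 1 ∧ j + 1 = q) := by omega
        rcases hcase with h | h | ⟨hq1, h⟩
        · subst h; exact noShQ1 k hk hj.shadow_src
        · subst h; exact hqmove k hk hj
        · exact noShQm1 k hk j h hj.shadow_src
      have hwall1 : ∀ k, k ≤ N → (γ k)[q+1]? = some t := by
        have := ChainM.frozen hch (q+1) (fun k hk j hj => hfq1 k hk j hj)
        intro k hk; rw [this k hk]; exact a2
      have hz : z = t := by
        have := hwall1 N (le_refl N); rw [b2] at this; exact Option.some_inj.1 this
      by_cases hq2move : ∃ k, k < N ∧ MoveAt M (q+2) (γ k) (γ (k+1))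
      · -- there are (q+2)-moves; control the letter at q+2
        have hk₁spec := Nat.find_spec hq2move
        set k₁ := Nat.find hq2move with hk₁
        obtain ⟨hk₁N, hk₁mv⟩ := hk₁spec
        -- before k₁, position q+2 is frozen at s
        have hfrozen_before : ∀ k, k ≤ k₁ → (γ k)[q+2]? = some s := by
          have := ChainM.frozen (hch.mono (le_of_lt hk₁N)) (q+2) ?_
          · intro k hk; rw [this k hk]; exact a3
          · intro k hk j hj hcon
            have h1 := hfq1 k (by omega) j hj
            have : j = q + 2 := by omega
            subst this
            exact Nat.find_min hq2move hk ⟨by omega, hj⟩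
        obtain ⟨σ, τ, h3₁, c1, c2, c3, d1, d2, d3⟩ := hk₁mv.window
        have hσ : σ = s := by
          have := hfrozen_before k₁ (le_refl _); rw [c1] at this; exact Option.some_inj.1 this
        set u' := τ with hu'
        have hsu' : M s u' = 3 := by rw [← hσ]; exact h3₁
        have hu't : u' ≠ t := by
          intro h
          refine noShQ1 k₁ hk₁N ⟨t, s, M.symmetric s t ▸ hst, hwall1 k₁ (by omega), ?_, ?_⟩
          · rw [show q + 1 + 1 = q + 2 by omega]; exact c1.trans (by rw [hσ])
          · rw [show q + 1 + 2 = q + 2 + 1 by omega, c2, h]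
        -- membership invariant for position q+2
        have hmem : ∀ k, k ≤ N → ((γ k)[q+2]? = some s ∨ (γ k)[q+2]? = some u') := by
          intro k hk
          induction k with
          | zero => exact Or.inl a3
          | succ n ihn =>
            obtain ⟨j, hj⟩ := hch n (by omega)
            by_cases htouch : j ≤ q + 2 ∧ q + 2 ≤ j + 2
            · have hcase : j = q + 2 ∨ j = q + 1 ∨ j = q := by omega
              rcases hcase with h | h | h
              · subst h
                -- a (q+2)-move; its window letters are {s, u'}
                have hk₁len : k₁ - n + (n - k₁) < N := by
                  have : k₁ ≤ n := by
                    by_contra hcon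
                    exact Nat.find_min hq2move (by omega) ⟨by omega, hj⟩
                  omega
                have hWE := IHB k₁ n (by omega) (by omega) hk₁len (q+2)
                  hk₁mv.shadow_src hj.shadow_src
                obtain ⟨σ₂, τ₂, h3₂, f1, f2, f3, g1, g2, g3⟩ := hj.window
                rcases hWE with ⟨e1, e2⟩ | ⟨e1, e2⟩
                · -- aligned: γ n window = (s, u')
                  right
                  rw [g1]
                  have : some τ = some τ₂ := by rw [← c2, ← f2, e2]
                  rw [← Option.some_inj.1 this]
                · -- swapped: γ n window = (u', s)
                  left
                  rw [g1]
                  have : some σ = some τ₂ := by rw [← c1, ← f2, e1]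
                  rw [← Option.some_inj.1 this, hσ]
              · subst h
                exact absurd hj.shadow_src (noShQ1 n (by omega))
              · subst h
                exact absurd hj (by exact fun h => hqmove n (by omega) h)
            · push_neg at htouch
              have : (γ (n+1))[q+2]? = (γ n)[q+2]? := by
                refine hj.getElem?_of_notin ?_
                rcases Nat.lt_or_ge (q+2) j with h | h
                · exact Or.inl h
                · right; omega
              rw [this]
              exact ihn (by omega)
        -- conclude
        have hxmem := hmem N (le_refl N)
        have hxq2 : (γ N)[q+2]? = some x := b3
        rcases hxmem with h | h
        · rw [hxq2] at h
          have : x = s := Option.some_inj.1 h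
          exact Or.inl ⟨by rw [a1, b1, this], by rw [a2, b2, hz]⟩
        · -- x = u' : triangle!
          rw [hxq2] at h
          have hxu : x = u' := Option.some_inj.1 h
          exfalso
          have h1 : M t s = 3 := M.symmetric s t ▸ hst
          have h2 : M u' t = 3 := by
            rw [← hxu, ← hz]; exact M.symmetric x z ▸ hxz
          have hts : t ≠ s := ne_of_M_eq_three h1
          have hsu : s ≠ u' := ne_of_M_eq_three hsu'
          exact htf t s u' hts hsu (fun h => hu't h.symm) h1 hsu'
            (M.symmetric u' t ▸ h2)
      · -- no (q+2)-moves: position q+2 frozen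
        push_neg at hq2move
        have hwall2 : ∀ k, k ≤ N → (γ k)[q+2]? = some s := by
          have := ChainM.frozen hch (q+2) ?_
          · intro k hk; rw [this k hk]; exact a3
          · intro k hk j hj hcon
            have h1 := hfq1 k hk j hj
            have : j = q + 2 := by omega
            subst this
            exact hq2move k hk hj
        have hx : x = s := by
          have := hwall2 N (le_refl N); rw [b3] at this; exact Option.some_inj.1 this
        exact Or.inl ⟨by rw [a1, b1, hx], by rw [a2, b2, hz]⟩

end AB


lemma braidEquiv_chain {M : CoxeterMatrix B} {α β : List B} (h : BraidEquiv M α β) :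
    ∃ (N : ℕ) (γ : ℕ → List B), ChainM M γ N ∧ γ 0 = α ∧ γ N = β := by
  induction h with
  | refl => exact ⟨0, fun _ => α, fun k hk => absurd hk (by omega), rfl, rfl⟩
  | tail hab hbc ih =>
    obtain ⟨N, γ, hch, h0, hN⟩ := ih
    rename_i b c
    refine ⟨N + 1, fun k => if k ≤ N then γ k else c, ?_, by simp [h0], by simp⟩
    intro k hk
    by_cases hkN : k < N
    · obtain ⟨j, hj⟩ := hch k hkN
      refine ⟨j, ?_⟩
      simp only [if_pos (show k ≤ N by omega), if_pos (show k + 1 ≤ N by omega)]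
      exact hj
    · have hkeq : k = N := by omega
      obtain ⟨j, hj⟩ := isBraidMove_iff_moveAt.1 hbc
      refine ⟨j, ?_⟩
      simp only [if_pos (show k ≤ N by omega), if_neg (show ¬ k + 1 ≤ N by omega)]
      rw [hkeq, hN]
      exact hj


/-- the support of a common braid shadow of two braid equivalent reduced
expressions is the same. -/
theorem statement_1 {B W : Type*} [Group W] {M : CoxeterMatrix B}
    (cs : CoxeterSystem M W) (hsl : SimplyLaced M) (htf : TriangleFree M)
    (w : W) (α β : List B)
    (hα : cs.wordProd α = w) (hredα : cs.IsReduced α)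
    (hβ : cs.wordProd β = w) (hredβ : cs.IsReduced β)
    (hlen : 3 ≤ cs.length w)
    (hequiv : BraidEquiv M α β)
    (i : ℕ) (hsα : HasShadowAt M α i) (hsβ : HasShadowAt M β i) :
    suppInterval α i (i + 2) = suppInterval β i (i + 2) := by
  obtain ⟨N, γ, hch, h0, hN⟩ := braidEquiv_chain hequiv
  have hwin : WinEq α β i := by
    have := (AB_main cs htf N γ hch (by rw [h0]; exact hredα) i).2
    rw [h0, hN] at this
    exact this hsα hsβ
  obtain ⟨s, t, hst, a1, a2, a3⟩ := hsα
  obtain ⟨x, z, hxz, b1, b2, b3⟩ := hsβ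
  have hmemα : ∀ c, c ∈ suppInterval α i (i+2) ↔ (c = s ∨ c = t) := by
    intro c
    constructor
    · rintro ⟨k, hk1, hk2, hk3⟩
      have : k = i ∨ k = i + 1 ∨ k = i + 2 := by omega
      rcases this with rfl | rfl | rfl
      · rw [a1] at hk3; exact Or.inl (Option.some_inj.1 hk3).symm
      · rw [a2] at hk3; exact Or.inr (Option.some_inj.1 hk3).symm
      · rw [a3] at hk3; exact Or.inl (Option.some_inj.1 hk3).symm
    · rintro (rfl | rfl)
      · exact ⟨i, le_refl _, by omega, a1⟩
      · exact ⟨i + 1, by omega, by omega, a2⟩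
  have hmemβ : ∀ c, c ∈ suppInterval β i (i+2) ↔ (c = x ∨ c = z) := by
    intro c
    constructor
    · rintro ⟨k, hk1, hk2, hk3⟩
      have : k = i ∨ k = i + 1 ∨ k = i + 2 := by omega
      rcases this with rfl | rfl | rfl
      · rw [b1] at hk3; exact Or.inl (Option.some_inj.1 hk3).symm
      · rw [b2] at hk3; exact Or.inr (Option.some_inj.1 hk3).symm
      · rw [b3] at hk3; exact Or.inl (Option.some_inj.1 hk3).symm
    · rintro (rfl | rfl)
      · exact ⟨i, le_refl _, by omega, b1⟩
      · exact ⟨i + 1, by omega, by omega, b2⟩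
  ext c
  rw [hmemα c, hmemβ c]
  rcases hwin with ⟨e1, e2⟩ | ⟨e1, e2⟩
  · have hsx : s = x := by
      rw [a1, b1] at e1; exact Option.some_inj.1 e1
    have htz : t = z := by
      rw [a2, b2] at e2; exact Option.some_inj.1 e2
    rw [hsx, htz]
  · have hsz : s = z := by
      rw [a1, b2] at e1; exact Option.some_inj.1 e1
    have htx : t = x := by
      rw [a2, b1] at e2; exact Option.some_inj.1 e2
    rw [hsz, htx]
    exact ⟨fun h => h.symm, fun h => h.symm⟩

end BraidFormal
end

section
/- In a simply-laced triangle-free Coxeter system, let α be a link of rank r ≥ 1. Then ⟦2i−1, 2i+1⟧ is a braid shadow of α if and only if the set of generators appearing in positions 2i−1, 2i, 2i+1 of α equals the set of all generators that can appear in position 2i across the braid class [α]. -/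
open List

namespace BraidFormal

variable {B : Type*}

variable {W : Type*} [Group W] {M : CoxeterMatrix B}

/-! ### Auxiliary lemmas -/

section Aux

variable {M : CoxeterMatrix B}

lemma mid0 (u v : List B) (x y z : B) : (u ++ [x,y,z] ++ v)[u.length]? = some x := by
  rw [List.append_assoc, List.getElem?_append_right (le_refl _)]; simp

lemma mid1 (u v : List B) (x y z : B) : (u ++ [x,y,z] ++ v)[u.length + 1]? = some y := by
  rw [List.append_assoc, List.getElem?_append_right (by omega)]
  have h : u.length + 1 - u.length = 1 := by omega
  rw [h]; rfl

lemma mid2 (u v : List B) (x y z : B) : (u ++ [x,y,z] ++ v)[u.length + 2]? = some z := by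
  rw [List.append_assoc, List.getElem?_append_right (by omega)]
  have h : u.length + 2 - u.length = 2 := by omega
  rw [h]; simp

lemma outside_eq (u v : List B) (x y z x' y' z' : B) (n : ℕ)
    (h : n < u.length ∨ u.length + 3 ≤ n) :
    (u ++ [x,y,z] ++ v)[n]? = (u ++ [x',y',z'] ++ v)[n]? := by
  rcases h with h | h
  · rw [List.append_assoc, List.getElem?_append_left h,
      List.append_assoc, List.getElem?_append_left h]
  · rw [List.append_assoc, List.getElem?_append_right (by omega),
      List.getElem?_append_right (by simp; omega),
      List.append_assoc, List.getElem?_append_right (by omega),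
      List.getElem?_append_right (by simp; omega)]
    simp

lemma decomp3 {β : List B} {i : ℕ} {a b c : B} (h1 : β[i]? = some a)
    (h2 : β[i+1]? = some b) (h3 : β[i+2]? = some c) :
    β = β.take i ++ [a, b, c] ++ β.drop (i+3) := by
  rw [List.getElem?_eq_some_iff] at h1 h2 h3
  obtain ⟨k1, e1⟩ := h1; obtain ⟨k2, e2⟩ := h2; obtain ⟨k3, e3⟩ := h3
  conv_lhs => rw [← List.take_append_drop i β]
  rw [List.append_assoc]
  congr 1
  rw [List.drop_eq_getElem_cons k1, List.drop_eq_getElem_cons k2,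
    List.drop_eq_getElem_cons k3, e1, e2, e3]
  rfl

lemma decomp2 {β : List B} {i : ℕ} {a b : B} (h1 : β[i]? = some a)
    (h2 : β[i+1]? = some b) :
    β = β.take i ++ [a, b] ++ β.drop (i+2) := by
  rw [List.getElem?_eq_some_iff] at h1 h2
  obtain ⟨k1, e1⟩ := h1; obtain ⟨k2, e2⟩ := h2
  conv_lhs => rw [← List.take_append_drop i β]
  rw [List.append_assoc]
  congr 1
  rw [List.drop_eq_getElem_cons k1, List.drop_eq_getElem_cons k2, e1, e2]
  rfl

lemma braidMove_symm {w w' : List B} (h : IsBraidMove M w w') : IsBraidMove M w' w := by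
  obtain ⟨u, v, s, t, hst, hw, hw'⟩ := h
  exact ⟨u, v, t, s, by rw [M.symmetric]; exact hst, hw', hw⟩

lemma braidEquiv_symm {w w' : List B} (h : BraidEquiv M w w') : BraidEquiv M w' w :=
  haveI : Std.Symm (IsBraidMove M) := ⟨fun _ _ h' => braidMove_symm h'⟩
  Std.Symm.symm (r := Relation.ReflTransGen (IsBraidMove M)) _ _ h

lemma pair_M {p q y y' : B} (hpq : M p q = 3)
    (h : (y = q ∧ y' = p) ∨ (y = p ∧ y' = q)) : M y y' = 3 := by
  rcases h with ⟨rfl, rfl⟩ | ⟨rfl, rfl⟩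
  · rw [M.symmetric]; exact hpq
  · exact hpq

lemma ne_of_M3 {a b : B} (h : M a b = 3) : a ≠ b := by
  rintro rfl; rw [M.diagonal] at h; omega

end Aux

/-- The key invariant around window `j`, for the shadow pair `{p, q}` (where `q` is the
center letter of some braid shadow of the class at `2 j`). -/
def Inv (M : CoxeterMatrix B) (p q : B) (j : ℕ) (β : List B) : Prop :=
  ∃ y y', ((y = q ∧ y' = p) ∨ (y = p ∧ y' = q)) ∧ β[2*j+1]? = some y ∧
    (β[2*j]? = some y' ∨
      (0 < j ∧ β[2*j-1]? = some y' ∧ ∃ c, β[2*j]? = some c ∧ M y' c = 3)) ∧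
    (β[2*j+2]? = some y' ∨
      (β[2*j+3]? = some y' ∧ ∃ c, β[2*j+2]? = some c ∧ M y' c = 3))

section Inv

variable {M : CoxeterMatrix B}

/-- The invariant is preserved by braid moves, provided all braid shadows sit at even
positions. -/
lemma inv_step (htf : TriangleFree M) {p q : B} {j : ℕ}
    (hpq : M p q = 3) {β β' : List B} (hmv : IsBraidMove M β β')
    (heven : ∀ e, HasShadowAt M β e → ∃ i, e = 2 * i)
    (hinv : Inv M p q j β) : Inv M p q j β' := by
  obtain ⟨u, v, s, t, hst, hβ, hβ'⟩ := hmv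
  subst hβ hβ'
  obtain ⟨i, hi⟩ := heven u.length ⟨s, t, hst, mid0 u v s t s, mid1 u v s t s, mid2 u v s t s⟩
  obtain ⟨y, y', hyy, hcent, hL, hR⟩ := hinv
  have hMyy : M y y' = 3 := pair_M hpq hyy
  have hyne : y ≠ y' := ne_of_M3 hMyy
  have Bout : ∀ n, n < u.length ∨ u.length + 3 ≤ n →
      (u ++ [t,s,t] ++ v)[n]? = (u ++ [s,t,s] ++ v)[n]? :=
    fun n hn => outside_eq u v t s t s t s n hn
  rcases show (i + 1 < j ∨ j + 1 < i) ∨ i + 1 = j ∨ i = j ∨ i = j + 1 by omega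
    with hd | hd | hd | hd
  · -- untouched window
    refine ⟨y, y', hyy, ?_, ?_, ?_⟩
    · rw [Bout _ (by omega)]; exact hcent
    · rcases hL with h1 | ⟨hj0, h1, c, h2, h3⟩
      · exact Or.inl (by rw [Bout _ (by omega)]; exact h1)
      · exact Or.inr ⟨hj0, by rw [Bout _ (by omega)]; exact h1, c,
          by rw [Bout _ (by omega)]; exact h2, h3⟩
    · rcases hR with h1 | ⟨h1, c, h2, h3⟩
      · exact Or.inl (by rw [Bout _ (by omega)]; exact h1)
      · exact Or.inr ⟨by rw [Bout _ (by omega)]; exact h1, c,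
          by rw [Bout _ (by omega)]; exact h2, h3⟩
  · -- move at `2*j - 2`  (`i + 1 = j`)
    have k1 : 2*j - 1 = u.length + 1 := by omega
    have k2 : 2*j = u.length + 2 := by omega
    refine ⟨y, y', hyy, ?_, ?_, ?_⟩
    · rw [Bout _ (by omega)]; exact hcent
    · rcases hL with h1 | ⟨_, h1, c, h2, _⟩
      · -- `β[2*j] = y'`, i.e. `s = y'`
        have hs : s = y' := by
          rw [k2, mid2 u v s t s] at h1; exact Option.some.inj h1
        refine Or.inr ⟨by omega, ?_, t, ?_, ?_⟩
        · rw [k1, mid1 u v t s t, hs]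
        · rw [k2, mid2 u v t s t]
        · rw [← hs]; exact hst
      · -- `β[2*j-1] = y'`, i.e. `t = y'`
        have ht : t = y' := by
          rw [k1, mid1 u v s t s] at h1; exact Option.some.inj h1
        exact Or.inl (by rw [k2, mid2 u v t s t, ht])
    · rcases hR with h1 | ⟨h1, c, h2, h3⟩
      · exact Or.inl (by rw [Bout _ (by omega)]; exact h1)
      · exact Or.inr ⟨by rw [Bout _ (by omega)]; exact h1, c,
          by rw [Bout _ (by omega)]; exact h2, h3⟩
  · -- move at `2*j`  (`i = j`)
    have k0 : 2*j = u.length := by omega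
    have k1 : 2*j + 1 = u.length + 1 := by omega
    have k2 : 2*j + 2 = u.length + 2 := by omega
    have hty : t = y := by
      rw [k1, mid1 u v s t s] at hcent; exact Option.some.inj hcent
    have hs : s = y' := by
      by_contra hne
      rcases hL with h1 | ⟨_, _, c, h2, h3⟩
      · rw [k0, mid0 u v s t s] at h1; exact hne (Option.some.inj h1)
      · have hc : c = s := by
          rw [k0, mid0 u v s t s] at h2; exact (Option.some.inj h2).symm
        have hsy : s ≠ y := by
          rintro rfl; rw [← hty] at hst; rw [M.diagonal] at hst; omega
        exact htf s y y' hsy hyne (fun h => hne h) (hty ▸ hst) hMyy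
          (by rw [M.symmetric, ← hc]; exact h3)
    -- after the move the window is `(y, y', y)`
    refine ⟨y', y, ?_, ?_, ?_, ?_⟩
    · rcases hyy with ⟨h1, h2⟩ | ⟨h1, h2⟩
      · exact Or.inr ⟨h2, h1⟩
      · exact Or.inl ⟨h2, h1⟩
    · rw [k1, mid1 u v t s t, hs]
    · exact Or.inl (by rw [k0, mid0 u v t s t, hty])
    · exact Or.inl (by rw [k2, mid2 u v t s t, hty])
  · -- move at `2*j + 2`  (`i = j + 1`)
    have k2 : 2*j + 2 = u.length := by omega
    have k3 : 2*j + 3 = u.length + 1 := by omega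
    refine ⟨y, y', hyy, ?_, ?_, ?_⟩
    · rw [Bout _ (by omega)]; exact hcent
    · rcases hL with h1 | ⟨hj0, h1, c, h2, h3⟩
      · exact Or.inl (by rw [Bout _ (by omega)]; exact h1)
      · exact Or.inr ⟨hj0, by rw [Bout _ (by omega)]; exact h1, c,
          by rw [Bout _ (by omega)]; exact h2, h3⟩
    · rcases hR with h1 | ⟨h1, c, h2, _⟩
      · -- `β[2*j+2] = y'`, i.e. `s = y'`
        have hs : s = y' := by
          rw [k2, mid0 u v s t s] at h1; exact Option.some.inj h1
        refine Or.inr ⟨?_, t, ?_, ?_⟩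
        · rw [k3, mid1 u v t s t, hs]
        · rw [k2, mid0 u v t s t]
        · rw [← hs]; exact hst
      · -- `β[2*j+3] = y'`, i.e. `t = y'`
        have ht : t = y' := by
          rw [k3, mid1 u v s t s] at h1; exact Option.some.inj h1
        exact Or.inl (by rw [k2, mid0 u v t s t, ht])

/-- Transport the invariant to the whole braid class. -/
lemma inv_all (htf : TriangleFree M) {p q : B} {j : ℕ}
    (hpq : M p q = 3) {α γ : List B}
    (hshape : ∀ e, ClassHasShadowAt M α e → ∃ i, e = 2 * i)
    (hγ : BraidEquiv M α γ) (hγinv : Inv M p q j γ)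
    {β : List B} (hβ : BraidEquiv M α β) : Inv M p q j β := by
  have hpath : Relation.ReflTransGen (IsBraidMove M) γ β :=
    Relation.ReflTransGen.trans (braidEquiv_symm hγ) hβ
  clear hβ
  induction hpath with
  | refl => exact hγinv
  | tail h1 h2 ih =>
    exact inv_step htf hpq h2
      (fun e hsh => hshape e ⟨_, Relation.ReflTransGen.trans hγ h1, hsh⟩) ih

/-- Any braid shadow at `2*j` of a word satisfying the invariant has pair `{p, q}`. -/
lemma shadow_pair (htf : TriangleFree M) {p q : B} {j : ℕ}
    (hpq : M p q = 3) {β : List B} (hinv : Inv M p q j β)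
    {s t : B} (hst : M s t = 3) (h0 : β[2*j]? = some s)
    (h1 : β[2*j+1]? = some t) (h2 : β[2*j+2]? = some s) :
    (t = q ∧ s = p) ∨ (t = p ∧ s = q) := by
  obtain ⟨y, y', hyy, hcent, hL, hR⟩ := hinv
  have hMyy : M y y' = 3 := pair_M hpq hyy
  have hyne : y ≠ y' := ne_of_M3 hMyy
  have hty : t = y := by rw [hcent] at h1; exact (Option.some.inj h1).symm
  have hs : s = y' := by
    by_contra hne
    rcases hL with hl | ⟨_, _, c, hc, hMc⟩
    · rw [h0] at hl; exact hne (Option.some.inj hl)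
    · have hcs : c = s := by rw [h0] at hc; exact (Option.some.inj hc).symm
      have hsy : s ≠ y := by
        rintro rfl; rw [← hty] at hst; rw [M.diagonal] at hst; omega
      exact htf s y y' hsy hyne hne (hty ▸ hst) hMyy
        (by rw [M.symmetric, ← hcs]; exact hMc)
  rcases hyy with ⟨hy, hy'⟩ | ⟨hy, hy'⟩
  · exact Or.inl ⟨hty ▸ hy, hs ▸ hy'⟩
  · exact Or.inr ⟨hty ▸ hy, hs ▸ hy'⟩

end Inv

/-- Adjacent letters of a reduced word are distinct. -/
lemma reduced_adj {M : CoxeterMatrix B} {W : Type*} [Group W]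
    (cs : CoxeterSystem M W) {β : List B} (hred : cs.IsReduced β)
    {k : ℕ} {a b : B} (h1 : β[k]? = some a) (h2 : β[k+1]? = some b) : a ≠ b := by
  rintro rfl
  have hk : k + 1 < β.length := (List.getElem?_eq_some_iff.mp h2).1
  have hdec := decomp2 h1 h2
  have hπ : cs.wordProd β = cs.wordProd (β.take k ++ β.drop (k+2)) := by
    conv_lhs => rw [hdec]
    rw [cs.wordProd_append, cs.wordProd_append, cs.wordProd_append]
    have h11 : cs.wordProd [a, a] = 1 := by
      rw [show [a,a] = a :: [a] from rfl, cs.wordProd_cons, cs.wordProd_singleton,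
        cs.simple_mul_simple_self]
    rw [h11, mul_one]
  have hle := cs.length_wordProd_le (β.take k ++ β.drop (k+2))
  have hlen2 : (β.take k ++ β.drop (k+2)).length = β.length - 2 := by
    simp only [List.length_append, List.length_take, List.length_drop]
    omega
  have hred' : cs.length (cs.wordProd β) = β.length := hred
  rw [hπ] at hred'
  omega

/-- `⟦2i-1,2i+1⟧` is a braid shadow of a link `α` iff the support of `α`
over it equals the support of the braid class at its center.  (Here `j + 1` plays the
role of the index `i` of the paper, `1 ≤ i ≤ r`; the 1-based interval `⟦2i-1,2i+1⟧`
starts at 0-based position `2j`, with center `2j+1`.) -/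
theorem statement_3 {B W : Type*} [Group W] {M : CoxeterMatrix B}
    (cs : CoxeterSystem M W) (hsl : SimplyLaced M) (htf : TriangleFree M)
    (α : List B) (r : ℕ) (hlink : IsLink cs α r) (hr : 1 ≤ r)
    (j : ℕ) (hj : j < r) :
    HasShadowAt M α (2 * j) ↔
      suppInterval α (2 * j) (2 * j + 2) = classSupp M α (2 * j + 1) := by
  obtain ⟨hred, hlen, hsh⟩ := hlink
  have hshape : ∀ e, ClassHasShadowAt M α e → ∃ i, e = 2 * i := by
    intro e h
    obtain ⟨i, _, h'⟩ := (hsh e).mp h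
    exact ⟨i, h'⟩
  obtain ⟨γ, hγmem, p, q, hpq, hγ0, hγ1, hγ2⟩ := (hsh (2*j)).mpr ⟨j, hj, rfl⟩
  have hγinv : Inv M p q j γ := ⟨q, p, Or.inl ⟨rfl, rfl⟩, hγ1, Or.inl hγ0, Or.inl hγ2⟩
  have hinv : ∀ β, BraidEquiv M α β → Inv M p q j β :=
    fun β hβ => inv_all htf hpq hshape hγmem hγinv hβ
  have hsub : ∀ x, x ∈ classSupp M α (2*j+1) → x = q ∨ x = p := by
    rintro x ⟨β, hβ, hx⟩
    obtain ⟨y, y', hyy, hcent, -, -⟩ := hinv β hβ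
    have hxy : x = y := Option.some.inj (hx.symm.trans hcent)
    rcases hyy with ⟨rfl, -⟩ | ⟨rfl, -⟩
    · exact Or.inl hxy
    · exact Or.inr hxy
  have hqmem : q ∈ classSupp M α (2*j+1) := ⟨γ, hγmem, hγ1⟩
  have hγlen : 2*j + 1 < γ.length := (List.getElem?_eq_some_iff.mp hγ1).1
  have hpmem : p ∈ classSupp M α (2*j+1) := by
    have htl : (γ.take (2*j)).length = 2*j := by
      rw [List.length_take]; omega
    refine ⟨γ.take (2*j) ++ [q,p,q] ++ γ.drop (2*j+3),
      Relation.ReflTransGen.tail hγmem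
        ⟨γ.take (2*j), γ.drop (2*j+3), p, q, hpq, decomp3 hγ0 hγ1 hγ2, rfl⟩, ?_⟩
    have := mid1 (γ.take (2*j)) (γ.drop (2*j+3)) q p q
    rw [htl] at this
    exact this
  constructor
  · rintro ⟨s0, t0, hst0, h0, h1, h2⟩
    have hmatch := shadow_pair htf hpq (hinv α Relation.ReflTransGen.refl) hst0 h0 h1 h2
    ext x
    simp only [suppInterval, classSupp, Set.mem_setOf_eq]
    constructor
    · rintro ⟨k, hk1, hk2, hx⟩
      have hx' : x = s0 ∨ x = t0 := by
        rcases show k = 2*j ∨ k = 2*j+1 ∨ k = 2*j+2 by omega with rfl | rfl | rfl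
        · exact Or.inl (Option.some.inj (hx.symm.trans h0))
        · exact Or.inr (Option.some.inj (hx.symm.trans h1))
        · exact Or.inl (Option.some.inj (hx.symm.trans h2))
      rcases hmatch with ⟨htq, hsp⟩ | ⟨htp, hsq⟩
      · rcases hx' with rfl | rfl
        · exact hsp ▸ hpmem
        · exact htq ▸ hqmem
      · rcases hx' with rfl | rfl
        · exact hsq ▸ hqmem
        · exact htp ▸ hpmem
    · intro hx
      rcases hsub x hx with rfl | rfl
      · -- x = q
        rcases hmatch with ⟨htq, -⟩ | ⟨-, hsq⟩
        · exact ⟨2*j+1, by omega, by omega, by rw [h1, htq]⟩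
        · exact ⟨2*j, le_refl _, by omega, by rw [h0, hsq]⟩
      · -- x = p
        rcases hmatch with ⟨-, hsp⟩ | ⟨htp, -⟩
        · exact ⟨2*j, le_refl _, by omega, by rw [h0, hsp]⟩
        · exact ⟨2*j+1, by omega, by omega, by rw [h1, htp]⟩
  · intro heq
    have hlt0 : 2*j < α.length := by omega
    have hlt1 : 2*j+1 < α.length := by omega
    have hlt2 : 2*j+2 < α.length := by omega
    obtain ⟨a, h0⟩ : ∃ a, α[2*j]? = some a := ⟨_, List.getElem?_eq_getElem hlt0⟩
    obtain ⟨b, h1⟩ : ∃ b, α[2*j+1]? = some b := ⟨_, List.getElem?_eq_getElem hlt1⟩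
    obtain ⟨c, h2⟩ : ∃ c, α[2*j+2]? = some c := ⟨_, List.getElem?_eq_getElem hlt2⟩
    have hmema : a ∈ classSupp M α (2*j+1) := by
      rw [← heq]; exact ⟨2*j, le_refl _, by omega, h0⟩
    have hmemb : b ∈ classSupp M α (2*j+1) := by
      rw [← heq]; exact ⟨2*j+1, by omega, by omega, h1⟩
    have hmemc : c ∈ classSupp M α (2*j+1) := by
      rw [← heq]; exact ⟨2*j+2, by omega, le_refl _, h2⟩
    have ha := hsub a hmema
    have hb := hsub b hmemb
    have hc := hsub c hmemc
    have hab : a ≠ b := reduced_adj cs hred h0 h1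
    have h2' : α[2*j+1+1]? = some c := by
      rw [show 2*j+1+1 = 2*j+2 by omega]; exact h2
    have hbc : b ≠ c := reduced_adj cs hred h1 h2'
    have hca : c = a := by
      rcases hb with hb | hb
      · rcases ha with ha | ha
        · exact absurd (ha.trans hb.symm) hab
        · rcases hc with hc | hc
          · exact absurd (hb.trans hc.symm) hbc
          · exact hc.trans ha.symm
      · rcases ha with ha | ha
        · rcases hc with hc | hc
          · exact hc.trans ha.symm
          · exact absurd (hb.trans hc.symm) hbc
        · exact absurd (ha.trans hb.symm) hab
    have hMab : M a b = 3 := by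
      rcases ha with rfl | rfl <;> rcases hb with rfl | rfl
      · exact absurd rfl hab
      · rw [M.symmetric]; exact hpq
      · exact hpq
      · exact absurd rfl hab
    exact ⟨a, b, hMab, h0, h1, by rw [h2, hca]⟩

end BraidFormal
end
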